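/- arXiv:1003.4855 — 4 statements merged into one kernel-verified Lean document; each statement's English description precedes it below -/
import Mathlib

section
/- For any nontrivial connected graph G, the partition dimension of G is at most the metric dimension of G plus 1, i.e., pd(G) ≤ dim(G) + 1. -/
open SimpleGraph

/-- Distance from a vertex to a set of vertices: `min {d(v,x) : x ∈ P}`. -/
noncomputable def distToSet {V : Type*} (G : SimpleGraph V) (v : V) (P : Set V) : ℕ :=
  sInf ((G.dist v) '' P)

/-- `S` is a resolving set of `G`. -/
def IsResolvingSet {V : Type*} (G : SimpleGraph V) (S : Set V) : Prop :=
  ∀ u v : V, u ≠ v → ∃ w ∈ S, G.dist u w ≠ G.dist v w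

/-- The metric dimension of `G`. -/
noncomputable def metricDim {V : Type*} (G : SimpleGraph V) : ℕ :=
  sInf {n | ∃ S : Finset V, S.card = n ∧ IsResolvingSet G ↑S}

/-- `Π` is a resolving partition of `G`: a partition of the vertex set such that
distinct vertices have distinct vectors of distances to the parts. -/
def IsResolvingPartition {V : Type*} (G : SimpleGraph V) (Pi : Set (Set V)) : Prop :=
  Setoid.IsPartition Pi ∧
    ∀ u v : V, u ≠ v → ∃ P ∈ Pi, distToSet G u P ≠ distToSet G v P

/-- The partition dimension of `G`. -/
noncomputable def partitionDim {V : Type*} (G : SimpleGraph V) : ℕ :=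
  sInf {n | ∃ Pi : Finset (Set V), Pi.card = n ∧ IsResolvingPartition G ↑Pi}

lemma distToSet_singleton {V : Type*} (G : SimpleGraph V) (v w : V) :
    distToSet G v {w} = G.dist v w := by
  simp [distToSet]

theorem stmt_2 {V : Type*} [Fintype V] [Nontrivial V] (G : SimpleGraph V)
    (hG : G.Connected) : partitionDim G ≤ metricDim G + 1 := by
  classical
  -- the set defining metricDim is nonempty
  have hne : ({n | ∃ S : Finset V, S.card = n ∧ IsResolvingSet G ↑S} : Set ℕ).Nonempty := by
    refine ⟨(Finset.univ : Finset V).card, Finset.univ, rfl, ?_⟩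
    intro u v huv
    exact ⟨u, by simp, by
      rw [G.dist_self]
      exact (hG.pos_dist_of_ne (Ne.symm huv)).ne⟩
  obtain ⟨S, hcard, hres⟩ := Nat.sInf_mem hne
  have hm : S.card = metricDim G := hcard
  -- the singletons of S
  set Sing : Finset (Set V) := S.image (fun w => ({w} : Set V)) with hSing
  have hmemSing : ∀ w ∈ S, ({w} : Set V) ∈ Sing := fun w hw => Finset.mem_image_of_mem _ hw
  have hSingCard : Sing.card ≤ S.card := Finset.card_image_le
  by_cases hc : ((↑S : Set V))ᶜ = (∅ : Set V)
  · -- S = univ, use singletons only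
    have huniv : (↑S : Set V) = Set.univ := by
      rw [← Set.compl_empty, ← hc, compl_compl]
    have hpart : IsResolvingPartition G ↑Sing := by
      constructor
      · constructor
        · intro h
          simp only [hSing, Finset.coe_image, Set.mem_image] at h
          obtain ⟨w, _, hw⟩ := h
          exact Set.singleton_ne_empty w hw
        · intro a
          have ha : a ∈ S := by
            have := Set.mem_univ a; rw [← huniv] at this; exact this
          refine ⟨{a}, ⟨hmemSing a ha, rfl⟩, ?_⟩
          rintro b ⟨hb, hab⟩
          simp only [hSing, Finset.coe_image, Set.mem_image, Finset.mem_coe] at hb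
          obtain ⟨w, _, rfl⟩ := hb
          rw [Set.mem_singleton_iff] at hab
          rw [hab]
      · intro u v huv
        obtain ⟨w, hw, hd⟩ := hres u v huv
        exact ⟨{w}, hmemSing w hw, by simpa [distToSet_singleton] using hd⟩
    calc partitionDim G ≤ Sing.card := Nat.sInf_le ⟨Sing, rfl, hpart⟩
      _ ≤ S.card := hSingCard
      _ ≤ metricDim G + 1 := by omega
  · -- complement nonempty; add it as one more part
    have hcne : ((↑S : Set V))ᶜ ≠ ∅ := hc
    set Pi : Finset (Set V) := insert ((↑S : Set V))ᶜ Sing with hPi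
    have hPicoe : (↑Pi : Set (Set V)) = insert ((↑S : Set V))ᶜ ↑Sing := by
      simp [hPi]
    have hpart : IsResolvingPartition G ↑Pi := by
      constructor
      · constructor
        · rw [hPicoe]
          intro h
          rcases h with h | h
          · exact hcne h.symm
          · simp only [hSing, Finset.coe_image, Set.mem_image] at h
            obtain ⟨w, _, hw⟩ := h
            exact Set.singleton_ne_empty w hw
        · intro a
          by_cases ha : a ∈ S
          · refine ⟨{a}, ⟨by rw [hPicoe]; exact Set.mem_insert_of_mem _ (hmemSing a ha), rfl⟩, ?_⟩
            rintro b ⟨hb, hab⟩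
            rw [hPicoe] at hb
            rcases hb with hb | hb
            · exfalso; rw [hb] at hab; exact hab ha
            · simp only [hSing, Finset.coe_image, Set.mem_image, Finset.mem_coe] at hb
              obtain ⟨w, _, rfl⟩ := hb
              rw [Set.mem_singleton_iff] at hab
              rw [hab]
          · refine ⟨((↑S : Set V))ᶜ, ⟨by rw [hPicoe]; exact Set.mem_insert _ _, ha⟩, ?_⟩
            rintro b ⟨hb, hab⟩
            rw [hPicoe] at hb
            rcases hb with hb | hb
            · exact hb
            · exfalso
              simp only [hSing, Finset.coe_image, Set.mem_image, Finset.mem_coe] at hb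
              obtain ⟨w, hw, rfl⟩ := hb
              rw [Set.mem_singleton_iff] at hab
              exact ha (hab ▸ hw)
      · intro u v huv
        obtain ⟨w, hw, hd⟩ := hres u v huv
        refine ⟨{w}, ?_, by simpa [distToSet_singleton] using hd⟩
        rw [hPicoe]; exact Set.mem_insert_of_mem _ (hmemSing w hw)
    calc partitionDim G ≤ Pi.card := Nat.sInf_le ⟨Pi, rfl, hpart⟩
      _ ≤ Sing.card + 1 := Finset.card_insert_le _ _
      _ ≤ metricDim G + 1 := by omega
end

section
/- For any connected graphs G₁ and G₂, pd(G₁ × G₂) ≤ pd(G₁) + pd(G₂), where × denotes the Cartesian product of graphs. -/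
open SimpleGraph

section Aux

variable {V₁ V₂ : Type*} {G₁ : SimpleGraph V₁} {G₂ : SimpleGraph V₂}

/-- Projection of a walk in the box product to walks in the factors, with total length. -/
lemma exists_proj_walks {x y : V₁ × V₂} (w : (G₁.boxProd G₂).Walk x y) :
    ∃ (p : G₁.Walk x.1 y.1) (q : G₂.Walk x.2 y.2), p.length + q.length ≤ w.length := by
  induction w with
  | nil => exact ⟨.nil, .nil, by simp⟩
  | cons h w ih =>
    obtain ⟨p, q, hpq⟩ := ih
    have hl := SimpleGraph.Walk.length_cons h w
    rcases h with ⟨hG, he⟩ | ⟨hH, he⟩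
    · exact ⟨p.cons hG, q.copy he.symm rfl, by simp [SimpleGraph.Walk.length_cons]; omega⟩
    · exact ⟨p.copy he.symm rfl, q.cons hH, by simp [SimpleGraph.Walk.length_cons]; omega⟩

lemma dist_boxProd (hG₁ : G₁.Connected) (hG₂ : G₂.Connected) (a c : V₁) (b d : V₂) :
    (G₁.boxProd G₂).dist (a, b) (c, d) = G₁.dist a c + G₂.dist b d := by
  apply le_antisymm
  · obtain ⟨p, hp⟩ := hG₁.exists_walk_length_eq_dist a c
    obtain ⟨q, hq⟩ := hG₂.exists_walk_length_eq_dist b d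
    have := SimpleGraph.dist_le ((p.boxProdLeft G₂ b).append (q.boxProdRight G₁ c))
    have e1 : (p.boxProdLeft G₂ b).length = p.length := SimpleGraph.Walk.length_map ..
    have e2 : (q.boxProdRight G₁ c).length = q.length := SimpleGraph.Walk.length_map ..
    rw [SimpleGraph.Walk.length_append, e1, e2, hp, hq] at this
    exact this
  · obtain ⟨w, hw⟩ := (hG₁.boxProd hG₂).exists_walk_length_eq_dist (a, b) (c, d)
    obtain ⟨p, q, hpq⟩ := exists_proj_walks w
    have h1 : G₁.dist a c ≤ p.length := SimpleGraph.dist_le p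
    have h2 : G₂.dist b d ≤ q.length := SimpleGraph.dist_le q
    omega

lemma distToSet_exists {V : Type*} {G : SimpleGraph V} {v : V} {P : Set V}
    (hP : P.Nonempty) : ∃ x ∈ P, G.dist v x = distToSet G v P := by
  have hne : ((G.dist v) '' P).Nonempty := hP.image _
  have := Nat.sInf_mem hne
  obtain ⟨x, hx, hx'⟩ := this
  exact ⟨x, hx, hx'⟩

lemma distToSet_le {V : Type*} {G : SimpleGraph V} {v x : V} {P : Set V}
    (hx : x ∈ P) : distToSet G v P ≤ G.dist v x :=
  Nat.sInf_le ⟨x, hx, rfl⟩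

lemma distToSet_eq_zero_of_mem {V : Type*} {G : SimpleGraph V} {v : V} {P : Set V}
    (hv : v ∈ P) : distToSet G v P = 0 := by
  have h := distToSet_le (G := G) (v := v) hv
  rw [SimpleGraph.dist_self] at h
  omega

lemma distToSet_prod (hG₁ : G₁.Connected) (hG₂ : G₂.Connected) (u : V₁) (v : V₂)
    {A : Set V₁} {B : Set V₂} (hA : A.Nonempty) (hB : B.Nonempty) :
    distToSet (G₁.boxProd G₂) (u, v) (A ×ˢ B) = distToSet G₁ u A + distToSet G₂ v B := by
  apply le_antisymm
  · obtain ⟨x, hx, hx'⟩ := distToSet_exists (G := G₁) (v := u) hA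
    obtain ⟨y, hy, hy'⟩ := distToSet_exists (G := G₂) (v := v) hB
    have := distToSet_le (G := G₁.boxProd G₂) (v := (u, v)) (x := (x, y))
      (P := A ×ˢ B) ⟨hx, hy⟩
    rwa [dist_boxProd hG₁ hG₂, hx', hy'] at this
  · apply le_csInf ((hA.prod hB).image _)
    rintro n ⟨⟨x, y⟩, ⟨hx, hy⟩, rfl⟩
    rw [dist_boxProd hG₁ hG₂]
    exact add_le_add (distToSet_le hx) (distToSet_le hy)

/-- The singleton partition is resolving for a connected graph. -/
lemma singleton_resolving {V : Type*} [Fintype V] (G : SimpleGraph V) (hG : G.Connected) :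
    ∃ Pi : Finset (Set V), IsResolvingPartition G ↑Pi := by
  classical
  refine ⟨(Finset.univ : Finset V).image fun v => ({v} : Set V), ?_, ?_⟩
  · constructor
    · simp only [Finset.coe_image, Finset.coe_univ, Set.image_univ, Set.mem_range]
      rintro ⟨v, hv⟩
      exact (Set.singleton_nonempty v).ne_empty hv
    · intro a
      refine ⟨{a}, ⟨by simp, rfl⟩, ?_⟩
      rintro P ⟨hP, haP⟩
      simp only [Finset.coe_image, Finset.coe_univ, Set.image_univ, Set.mem_range] at hP
      obtain ⟨v, rfl⟩ := hP
      obtain rfl : a = v := haP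
      rfl
  · intro u v huv
    refine ⟨{u}, by simp, ?_⟩
    have h1 : distToSet G u {u} = 0 := distToSet_eq_zero_of_mem rfl
    have h2 : distToSet G v {u} = G.dist v u := by
      simp [distToSet]
    have := hG.pos_dist_of_ne (Ne.symm huv)
    rw [h1, h2, SimpleGraph.dist_comm] at *
    omega

end Aux

theorem stmt_3 {V₁ V₂ : Type*} [Fintype V₁] [Fintype V₂]
    (G₁ : SimpleGraph V₁) (G₂ : SimpleGraph V₂)
    (hG₁ : G₁.Connected) (hG₂ : G₂.Connected) :
    partitionDim (G₁.boxProd G₂) ≤ partitionDim G₁ + partitionDim G₂ := by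
  classical
  -- obtain optimal resolving partitions of the factors
  have hS₁ : {n | ∃ Pi : Finset (Set V₁), Pi.card = n ∧ IsResolvingPartition G₁ ↑Pi}.Nonempty := by
    obtain ⟨Pi, hPi⟩ := singleton_resolving G₁ hG₁
    exact ⟨Pi.card, Pi, rfl, hPi⟩
  have hS₂ : {n | ∃ Pi : Finset (Set V₂), Pi.card = n ∧ IsResolvingPartition G₂ ↑Pi}.Nonempty := by
    obtain ⟨Pi, hPi⟩ := singleton_resolving G₂ hG₂
    exact ⟨Pi.card, Pi, rfl, hPi⟩
  obtain ⟨Pi₁, hcard₁, hpart₁, hres₁⟩ := Nat.sInf_mem hS₁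
  obtain ⟨Pi₂, hcard₂, hpart₂, hres₂⟩ := Nat.sInf_mem hS₂
  -- a distinguished part of Pi₂
  have : Nonempty V₂ := hG₂.nonempty
  obtain ⟨b₀⟩ := this
  have : Nonempty V₁ := hG₁.nonempty
  obtain ⟨Q₁, ⟨hQ₁mem', hb₀Q₁⟩, -⟩ := hpart₂.2 b₀
  have hQ₁mem : Q₁ ∈ Pi₂ := by exact_mod_cast hQ₁mem'
  have hQ₁ne : Q₁.Nonempty := ⟨b₀, hb₀Q₁⟩
  have hne₁ : ∀ A ∈ Pi₁, (A : Set V₁).Nonempty := fun A hA =>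
    Set.nonempty_iff_ne_empty.mpr fun h => hpart₁.1 (h ▸ (by exact_mod_cast hA))
  have hne₂ : ∀ B ∈ Pi₂, (B : Set V₂).Nonempty := fun B hB =>
    Set.nonempty_iff_ne_empty.mpr fun h => hpart₂.1 (h ▸ (by exact_mod_cast hB))
  -- the construction
  set PP : Finset (Set (V₁ × V₂)) :=
    (Pi₁.image fun A => A ×ˢ Q₁) ∪ ((Pi₂.erase Q₁).image fun B => (Set.univ : Set V₁) ×ˢ B) with hPP
  have hmem : ∀ P : Set (V₁ × V₂), P ∈ PP ↔
      (∃ A ∈ Pi₁, P = A ×ˢ Q₁) ∨ (∃ B ∈ Pi₂, B ≠ Q₁ ∧ P = (Set.univ : Set V₁) ×ˢ B) := by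
    intro P
    simp only [hPP, Finset.mem_union, Finset.mem_image, Finset.mem_erase]
    constructor
    · rintro (⟨A, hA, rfl⟩ | ⟨B, ⟨hB1, hB2⟩, rfl⟩)
      · exact Or.inl ⟨A, hA, rfl⟩
      · exact Or.inr ⟨B, hB2, hB1, rfl⟩
    · rintro (⟨A, hA, rfl⟩ | ⟨B, hB2, hB1, rfl⟩)
      · exact Or.inl ⟨A, hA, rfl⟩
      · exact Or.inr ⟨B, ⟨hB1, hB2⟩, rfl⟩
  -- it is a partition
  have hpart : Setoid.IsPartition (↑PP : Set (Set (V₁ × V₂))) := by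
    constructor
    · intro h
      rw [Finset.mem_coe, hmem] at h
      rcases h with ⟨A, hA, hAe⟩ | ⟨B, hB, -, hBe⟩
      · exact ((hne₁ A hA).prod hQ₁ne).ne_empty hAe.symm
      · exact ((Set.univ_nonempty).prod (hne₂ B hB)).ne_empty hBe.symm
    · rintro ⟨u, v⟩
      obtain ⟨Bv, ⟨hBv', hvBv⟩, hBvu⟩ := hpart₂.2 v
      have hBvmem : Bv ∈ Pi₂ := by exact_mod_cast hBv'
      by_cases hv : v ∈ Q₁
      · obtain ⟨Au, ⟨hAu', huAu⟩, hAuu⟩ := hpart₁.2 u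
        have hAumem : Au ∈ Pi₁ := by exact_mod_cast hAu'
        refine ⟨Au ×ˢ Q₁, ⟨(by rw [Finset.mem_coe, hmem]; exact Or.inl ⟨Au, hAumem, rfl⟩),
          ⟨huAu, hv⟩⟩, ?_⟩
        rintro P ⟨hP, huvP⟩
        rw [Finset.mem_coe, hmem] at hP
        rcases hP with ⟨A, hA, rfl⟩ | ⟨B, hB, hBne, rfl⟩
        · obtain ⟨hu, -⟩ := huvP
          rw [hAuu A ⟨by exact_mod_cast hA, hu⟩]
        · obtain ⟨-, hvB⟩ := huvP
          have h1 := hBvu B ⟨by exact_mod_cast hB, hvB⟩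
          have h2 := hBvu Q₁ ⟨hQ₁mem', hv⟩
          exact absurd (h1.trans h2.symm) hBne
      · have hBvQ : Bv ≠ Q₁ := fun h => hv (h ▸ hvBv)
        refine ⟨(Set.univ : Set V₁) ×ˢ Bv,
          ⟨(by rw [Finset.mem_coe, hmem]; exact Or.inr ⟨Bv, hBvmem, hBvQ, rfl⟩),
          ⟨Set.mem_univ _, hvBv⟩⟩, ?_⟩
        rintro P ⟨hP, huvP⟩
        rw [Finset.mem_coe, hmem] at hP
        rcases hP with ⟨A, hA, rfl⟩ | ⟨B, hB, hBne, rfl⟩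
        · exact absurd huvP.2 hv
        · obtain ⟨-, hvB⟩ := huvP
          rw [hBvu B ⟨by exact_mod_cast hB, hvB⟩]
  -- it is resolving
  have hres : ∀ p q : V₁ × V₂, p ≠ q →
      ∃ P ∈ (↑PP : Set (Set (V₁ × V₂))), distToSet (G₁.boxProd G₂) p P ≠
        distToSet (G₁.boxProd G₂) q P := by
    rintro ⟨u, v⟩ ⟨u', v'⟩ hne
    by_cases hvv : v = v'
    · subst hvv
      have huu : u ≠ u' := fun h => hne (by rw [h])
      obtain ⟨A, hA, hAd⟩ := hres₁ u u' huu
      have hAmem : A ∈ Pi₁ := by exact_mod_cast hA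
      refine ⟨A ×ˢ Q₁, (by rw [Finset.mem_coe, hmem]; exact Or.inl ⟨A, hAmem, rfl⟩), ?_⟩
      rw [distToSet_prod hG₁ hG₂ _ _ (hne₁ A hAmem) hQ₁ne,
        distToSet_prod hG₁ hG₂ _ _ (hne₁ A hAmem) hQ₁ne]
      omega
    · obtain ⟨B, hB, hBd⟩ := hres₂ v v' hvv
      have hBmem : B ∈ Pi₂ := by exact_mod_cast hB
      by_cases hBQ : B = Q₁
      · subst hBQ
        -- use the part of Pi₁ containing u or u'
        obtain ⟨Au, ⟨hAu', huAu⟩, -⟩ := hpart₁.2 u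
        obtain ⟨Au', ⟨hAu'', huAu'⟩, -⟩ := hpart₁.2 u'
        have hAumem : Au ∈ Pi₁ := by exact_mod_cast hAu'
        have hAu'mem : Au' ∈ Pi₁ := by exact_mod_cast hAu''
        rcases lt_or_gt_of_ne hBd with hlt | hgt
        · refine ⟨Au ×ˢ B, (by rw [Finset.mem_coe, hmem]; exact Or.inl ⟨Au, hAumem, rfl⟩), ?_⟩
          rw [distToSet_prod hG₁ hG₂ _ _ (hne₁ _ hAumem) hQ₁ne,
            distToSet_prod hG₁ hG₂ _ _ (hne₁ _ hAumem) hQ₁ne,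
            distToSet_eq_zero_of_mem huAu]
          omega
        · refine ⟨Au' ×ˢ B, (by rw [Finset.mem_coe, hmem]; exact Or.inl ⟨Au', hAu'mem, rfl⟩), ?_⟩
          rw [distToSet_prod hG₁ hG₂ _ _ (hne₁ _ hAu'mem) hQ₁ne,
            distToSet_prod hG₁ hG₂ _ _ (hne₁ _ hAu'mem) hQ₁ne,
            distToSet_eq_zero_of_mem huAu']
          omega
      · refine ⟨(Set.univ : Set V₁) ×ˢ B,
          (by rw [Finset.mem_coe, hmem]; exact Or.inr ⟨B, hBmem, hBQ, rfl⟩), ?_⟩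
        have hu0 : distToSet G₁ u Set.univ = 0 := distToSet_eq_zero_of_mem (Set.mem_univ u)
        have hu'0 : distToSet G₁ u' Set.univ = 0 := distToSet_eq_zero_of_mem (Set.mem_univ u')
        rw [distToSet_prod hG₁ hG₂ _ _ Set.univ_nonempty (hne₂ B hBmem),
          distToSet_prod hG₁ hG₂ _ _ Set.univ_nonempty (hne₂ B hBmem), hu0, hu'0]
        omega
  -- conclude
  have hmemS : PP.card ∈ {n | ∃ Pi : Finset (Set (V₁ × V₂)), Pi.card = n ∧
      IsResolvingPartition (G₁.boxProd G₂) ↑Pi} := ⟨PP, rfl, hpart, hres⟩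
  have hcardPP : PP.card ≤ partitionDim G₁ + partitionDim G₂ := by
    calc PP.card ≤ (Pi₁.image fun A => A ×ˢ Q₁).card +
        ((Pi₂.erase Q₁).image fun B => (Set.univ : Set V₁) ×ˢ B).card := Finset.card_union_le _ _
      _ ≤ Pi₁.card + (Pi₂.erase Q₁).card :=
        add_le_add (Finset.card_image_le) (Finset.card_image_le)
      _ ≤ Pi₁.card + Pi₂.card := add_le_add le_rfl (Finset.card_erase_le)
      _ = partitionDim G₁ + partitionDim G₂ := by rw [hcard₁, hcard₂, partitionDim, partitionDim]
  exact le_trans (Nat.sInf_le hmemS) hcardPP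
end

section
/- For any connected graphs G₁ and G₂, pd(G₁ × G₂) ≤ dim(G₁) + dim(G₂) + 1. -/
open SimpleGraph

section aux
variable {V₁ V₂ : Type*} {G₁ : SimpleGraph V₁} {G₂ : SimpleGraph V₂}

lemma walk_length_ge_aux (h₁ : G₁.Connected) (h₂ : G₂.Connected) :
    ∀ {x y : V₁ × V₂} (w : (G₁.boxProd G₂).Walk x y),
      G₁.dist x.1 y.1 + G₂.dist x.2 y.2 ≤ w.length := by
  intro x y w
  induction w with
  | nil => simp
  | @cons a b c h w ih =>
    rw [Walk.length_cons]
    rcases boxProd_adj.mp h with ⟨hadj, heq⟩ | ⟨hadj, heq⟩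
    · have t1 : G₁.dist a.1 c.1 ≤ G₁.dist a.1 b.1 + G₁.dist b.1 c.1 := h₁.dist_triangle
      have t2 : G₁.dist a.1 b.1 ≤ 1 := by
        simpa using dist_le (Walk.cons hadj Walk.nil)
      have heq2 : G₂.dist a.2 c.2 = G₂.dist b.2 c.2 := by rw [heq]
      omega
    · have t1 : G₂.dist a.2 c.2 ≤ G₂.dist a.2 b.2 + G₂.dist b.2 c.2 := h₂.dist_triangle
      have t2 : G₂.dist a.2 b.2 ≤ 1 := by
        simpa using dist_le (Walk.cons hadj Walk.nil)
      have heq2 : G₁.dist a.1 c.1 = G₁.dist b.1 c.1 := by rw [heq]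
      omega

lemma boxProd_dist_aux (h₁ : G₁.Connected) (h₂ : G₂.Connected) (a c : V₁) (b d : V₂) :
    (G₁.boxProd G₂).dist (a, b) (c, d) = G₁.dist a c + G₂.dist b d := by
  apply le_antisymm
  · obtain ⟨w₁, hw₁⟩ := h₁.exists_walk_length_eq_dist a c
    obtain ⟨w₂, hw₂⟩ := h₂.exists_walk_length_eq_dist b d
    have := dist_le ((w₁.boxProdLeft G₂ b).append (w₂.boxProdRight G₁ c))
    have e1 : (w₁.boxProdLeft G₂ b).length = w₁.length := Walk.length_map _ _
    have e2 : (w₂.boxProdRight G₁ c).length = w₂.length := Walk.length_map _ _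
    rw [Walk.length_append, e1, e2] at this
    simpa [Walk.length_append, Walk.boxProdLeft, Walk.boxProdRight, hw₁, hw₂] using this
  · obtain ⟨w, hw⟩ := (h₁.boxProd h₂).exists_walk_length_eq_dist (a, b) (c, d)
    simpa [hw] using walk_length_ge_aux h₁ h₂ w

lemma distToSet_A (h₁ : G₁.Connected) (h₂ : G₂.Connected) (u a : V₁) (v : V₂) :
    distToSet (G₁.boxProd G₂) (u, v) ({a} ×ˢ Set.univ) = G₁.dist u a := by
  unfold distToSet
  apply le_antisymm
  · apply Nat.sInf_le
    exact ⟨(a, v), by simp, by rw [boxProd_dist_aux h₁ h₂]; simp⟩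
  · refine le_csInf ⟨_, ⟨(a, v), by simp, rfl⟩⟩ ?_
    rintro n ⟨⟨p, q⟩, hp, rfl⟩
    rw [Set.mem_prod, Set.mem_singleton_iff] at hp
    obtain ⟨rfl, -⟩ := hp
    dsimp only
    rw [boxProd_dist_aux h₁ h₂]; omega

lemma distToSet_B (h₁ : G₁.Connected) (h₂ : G₂.Connected) (T : Set V₁) (hT : T.Nonempty)
    (u : V₁) (v b : V₂) :
    distToSet (G₁.boxProd G₂) (u, v) (T ×ˢ {b}) = distToSet G₁ u T + G₂.dist v b := by
  unfold distToSet
  have hne : ((G₁.dist u) '' T).Nonempty := hT.image _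
  obtain ⟨m, hmT, hm⟩ : ∃ a ∈ T, G₁.dist u a = sInf ((G₁.dist u) '' T) := Nat.sInf_mem hne
  apply le_antisymm
  · apply Nat.sInf_le
    refine ⟨(m, b), by simp [hmT], ?_⟩
    rw [boxProd_dist_aux h₁ h₂, hm]
  · apply le_csInf ((hT.prod (Set.singleton_nonempty b)).image _)
    rintro n ⟨⟨p, q⟩, hpq, rfl⟩
    rw [Set.mem_prod, Set.mem_singleton_iff] at hpq
    obtain ⟨hp, rfl⟩ := hpq
    dsimp only
    rw [boxProd_dist_aux h₁ h₂]
    have : sInf ((G₁.dist u) '' T) ≤ G₁.dist u p := Nat.sInf_le ⟨p, hp, rfl⟩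
    omega

end aux

section main
variable {V₁ V₂ : Type*} {G₁ : SimpleGraph V₁} {G₂ : SimpleGraph V₂}

lemma partition_of_resolving (h₁ : G₁.Connected) (h₂ : G₂.Connected)
    (S₁ : Finset V₁) (S₂ : Finset V₂)
    (hR₁ : IsResolvingSet G₁ ↑S₁) (hR₂ : IsResolvingSet G₂ ↑S₂)
    (hc₁ : ((↑S₁ : Set V₁)ᶜ).Nonempty) (hc₂ : ((↑S₂ : Set V₂)ᶜ).Nonempty) :
    partitionDim (G₁.boxProd G₂) ≤ S₁.card + S₂.card + 1 := by
  classical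
  have hV₂ : Nonempty V₂ := h₂.nonempty
  set C : Set (V₁ × V₂) := (↑S₁ : Set V₁)ᶜ ×ˢ (↑S₂ : Set V₂)ᶜ with hC
  set fA : V₁ → Set (V₁ × V₂) := fun a => {a} ×ˢ Set.univ with hfA
  set fB : V₂ → Set (V₁ × V₂) := fun b => (↑S₁ : Set V₁)ᶜ ×ˢ {b} with hfB
  set Pi : Finset (Set (V₁ × V₂)) := S₁.image fA ∪ S₂.image fB ∪ {C} with hPi
  have hmemPi : ∀ P : Set (V₁ × V₂), P ∈ Pi ↔
      (∃ a ∈ S₁, fA a = P) ∨ (∃ b ∈ S₂, fB b = P) ∨ P = C := by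
    intro P
    simp only [hPi, Finset.mem_union, Finset.mem_image, Finset.mem_singleton]
    rw [or_assoc]
  have hApart : ∀ a ∈ S₁, (fA a) ∈ Pi := fun a ha =>
    (hmemPi _).mpr (Or.inl ⟨a, ha, rfl⟩)
  have hBpart : ∀ b ∈ S₂, (fB b) ∈ Pi := fun b hb =>
    (hmemPi _).mpr (Or.inr (Or.inl ⟨b, hb, rfl⟩))
  -- partition property
  have hpart : Setoid.IsPartition (↑Pi : Set (Set (V₁ × V₂))) := by
    constructor
    · intro hemp
      rw [Finset.mem_coe, hmemPi] at hemp
      rcases hemp with ⟨a, -, ha⟩ | ⟨b, -, hb⟩ | hc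
      · have : (a, Classical.arbitrary V₂) ∈ fA a := ⟨rfl, trivial⟩
        rw [ha] at this; exact this
      · have : (hc₁.choose, b) ∈ fB b := ⟨hc₁.choose_spec, rfl⟩
        rw [hb] at this; exact this
      · have : (hc₁.choose, hc₂.choose) ∈ (∅ : Set (V₁ × V₂)) := by
          rw [hc, hC]; exact ⟨hc₁.choose_spec, hc₂.choose_spec⟩
        exact this
    · rintro ⟨p, q⟩
      by_cases hp : p ∈ S₁
      · refine ⟨fA p, ⟨hApart p hp, ⟨rfl, trivial⟩⟩, ?_⟩
        rintro P ⟨hP, hxP⟩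
        rw [Finset.mem_coe, hmemPi] at hP
        rcases hP with ⟨a, -, rfl⟩ | ⟨b, -, rfl⟩ | rfl
        · obtain ⟨rfl, -⟩ := hxP; rfl
        · exact absurd hp (by exact hxP.1)
        · exact absurd hp (by exact hxP.1)
      · by_cases hq : q ∈ S₂
        · refine ⟨fB q, ⟨hBpart q hq, ⟨by exact hp, rfl⟩⟩, ?_⟩
          rintro P ⟨hP, hxP⟩
          rw [Finset.mem_coe, hmemPi] at hP
          rcases hP with ⟨a, ha, rfl⟩ | ⟨b, -, rfl⟩ | rfl
          · obtain ⟨rfl, -⟩ := hxP; exact absurd ha hp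
          · obtain ⟨-, rfl⟩ := hxP; rfl
          · exact absurd hq (by exact hxP.2)
        · refine ⟨C, ⟨(hmemPi _).mpr (Or.inr (Or.inr rfl)), ⟨by exact hp, by exact hq⟩⟩, ?_⟩
          rintro P ⟨hP, hxP⟩
          rw [Finset.mem_coe, hmemPi] at hP
          rcases hP with ⟨a, ha, rfl⟩ | ⟨b, hb, rfl⟩ | rfl
          · obtain ⟨rfl, -⟩ := hxP; exact absurd ha hp
          · obtain ⟨-, rfl⟩ := hxP; exact absurd hb hq
          · rfl
  -- resolving property
  have hres : ∀ u v : V₁ × V₂, u ≠ v →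
      ∃ P ∈ (↑Pi : Set (Set (V₁ × V₂))),
        distToSet (G₁.boxProd G₂) u P ≠ distToSet (G₁.boxProd G₂) v P := by
    rintro ⟨u, v⟩ ⟨u', v'⟩ hne
    by_cases huu : u = u'
    · subst huu
      have hvv : v ≠ v' := by
        intro h; exact hne (by rw [h])
      obtain ⟨t, ht, hd⟩ := hR₂ v v' hvv
      refine ⟨fB t, hBpart t (by exact_mod_cast ht), ?_⟩
      rw [hfB]
      rw [distToSet_B h₁ h₂ _ hc₁, distToSet_B h₁ h₂ _ hc₁]
      omega
    · obtain ⟨s, hs, hd⟩ := hR₁ u u' huu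
      refine ⟨fA s, hApart s (by exact_mod_cast hs), ?_⟩
      rw [hfA]
      rw [distToSet_A h₁ h₂, distToSet_A h₁ h₂]
      exact hd
  have hmem : Pi.card ∈ {n | ∃ Pi : Finset (Set (V₁ × V₂)), Pi.card = n ∧
      IsResolvingPartition (G₁.boxProd G₂) ↑Pi} := ⟨Pi, rfl, hpart, hres⟩
  calc partitionDim (G₁.boxProd G₂) ≤ Pi.card := Nat.sInf_le hmem
    _ ≤ (S₁.image fA ∪ S₂.image fB).card + ({C} : Finset (Set (V₁ × V₂))).card :=
        Finset.card_union_le _ _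
    _ ≤ (S₁.image fA).card + (S₂.image fB).card + 1 := by
        have := Finset.card_union_le (S₁.image fA) (S₂.image fB)
        simp only [Finset.card_singleton]
        omega
    _ ≤ S₁.card + S₂.card + 1 := by
        have h1 := Finset.card_image_le (s := S₁) (f := fA)
        have h2 := Finset.card_image_le (s := S₂) (f := fB)
        omega

lemma exists_min_resolving {V : Type*} [Fintype V] (G : SimpleGraph V) (hG : G.Connected) :
    ∃ S : Finset V, S.card = metricDim G ∧ IsResolvingSet G ↑S ∧
      ((↑S : Set V)ᶜ).Nonempty := by
  classical
  obtain ⟨w⟩ : Nonempty V := hG.nonempty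
  have hres : IsResolvingSet G ↑(Finset.univ.erase w) := by
    intro u v huv
    by_cases hu : u = w
    · subst hu
      refine ⟨v, by simp [Ne.symm huv], ?_⟩
      rw [dist_self]
      exact (hG.pos_dist_of_ne huv).ne'
    · refine ⟨u, by simp [hu], ?_⟩
      rw [dist_self]
      exact (hG.pos_dist_of_ne (Ne.symm huv)).ne
  have hmemset : metricDim G ∈ {n | ∃ S : Finset V, S.card = n ∧ IsResolvingSet G ↑S} :=
    Nat.sInf_mem ⟨(Finset.univ.erase w).card, _, rfl, hres⟩
  obtain ⟨S, hcard, hS⟩ := hmemset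
  refine ⟨S, hcard, hS, ?_⟩
  have h1 : metricDim G ≤ (Finset.univ.erase w).card := Nat.sInf_le ⟨_, rfl, hres⟩
  have h2 : (Finset.univ.erase w).card < Fintype.card V := by
    rw [Finset.card_erase_of_mem (Finset.mem_univ w), Finset.card_univ]
    have : 0 < Fintype.card V := Fintype.card_pos_iff.mpr ⟨w⟩
    omega
  by_contra hne
  rw [Set.not_nonempty_iff_eq_empty] at hne
  have hcoe : (↑S : Set V) = Set.univ := by
    rw [← compl_compl (↑S : Set V), hne, Set.compl_empty]
  have hSuniv : S = Finset.univ := by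
    rwa [← Finset.coe_univ, Finset.coe_inj] at hcoe
  have h3 : S.card < Fintype.card V := by
    rw [hcard]
    exact lt_of_le_of_lt h1 h2
  rw [hSuniv, Finset.card_univ] at h3
  exact lt_irrefl _ h3

end main

theorem stmt_7 {V₁ V₂ : Type*} [Fintype V₁] [Fintype V₂]
    (G₁ : SimpleGraph V₁) (G₂ : SimpleGraph V₂)
    (hG₁ : G₁.Connected) (hG₂ : G₂.Connected) :
    partitionDim (G₁.boxProd G₂) ≤ metricDim G₁ + metricDim G₂ + 1 := by
  obtain ⟨S₁, hc₁, hR₁, hn₁⟩ := exists_min_resolving G₁ hG₁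
  obtain ⟨S₂, hc₂, hR₂, hn₂⟩ := exists_min_resolving G₂ hG₂
  have := partition_of_resolving hG₁ hG₂ S₁ S₂ hR₁ hR₂ hn₁ hn₂
  rwa [hc₁, hc₂] at this
end

section
/- For any connected graph G and any n ≥ 2, pd(G × K_{1,n}) ≤ pd(G) + n − 1, where K_{1,n} is the star with n leaves. -/
open SimpleGraph

section Aux

variable {α β : Type*} {G : SimpleGraph α} {H : SimpleGraph β}

theorem aux_len_sum [DecidableEq α] [DecidableEq β] [DecidableRel G.Adj] [DecidableRel H.Adj]
    {x y : α × β} (w : (G □ H).Walk x y) :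
    w.ofBoxProdLeft.length + w.ofBoxProdRight.length = w.length := by
  induction w with
  | nil => rfl
  | @cons x y z h w ih =>
    obtain ⟨a, b⟩ := x
    obtain ⟨c, d⟩ := y
    by_cases hp : G.Adj a c ∧ b = d
    · have hq : ¬ (H.Adj b d ∧ a = c) := fun hq => (hp.1.ne hq.2).elim
      obtain ⟨h1, h2⟩ := hp
      subst h2
      obtain ⟨e, f⟩ := z
      exact (Walk.length_boxProd (Walk.cons h w)).symm
    · have hq : H.Adj b d ∧ a = c := (h : _ ∨ _).resolve_left hp
      obtain ⟨h1, h2⟩ := hq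
      subst h2
      have hp' : ¬ (G.Adj a a ∧ b = d) := fun hc => hc.1.ne rfl
      obtain ⟨e, f⟩ := z
      exact (Walk.length_boxProd (Walk.cons h w)).symm

theorem aux_dist_boxProd (hG : G.Connected) (hH : H.Connected) (u v : α) (a b : β) :
    (G □ H).dist (u, a) (v, b) = G.dist u v + H.dist a b := by
  classical
  refine le_antisymm ?_ ?_
  · obtain ⟨w1, hw1⟩ := (hG u v).exists_walk_length_eq_dist
    obtain ⟨w2, hw2⟩ := (hH a b).exists_walk_length_eq_dist
    calc (G □ H).dist (u, a) (v, b) ≤ ((w1.boxProdLeft H a).append (w2.boxProdRight G v)).length :=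
          dist_le _
      _ = G.dist u v + H.dist a b := by
          rw [Walk.length_append,
            show (w1.boxProdLeft H a).length = w1.length from Walk.length_map _ _,
            show (w2.boxProdRight G v).length = w2.length from Walk.length_map _ _, hw1, hw2]
  · obtain ⟨w, hw⟩ := ((hG.boxProd hH) (u, a) (v, b)).exists_walk_length_eq_dist
    have h1 : G.dist u v ≤ w.ofBoxProdLeft.length := dist_le _
    have h2 : H.dist a b ≤ w.ofBoxProdRight.length := dist_le _
    have := aux_len_sum w
    omega

theorem aux_distToSet_singleton (u x : α) : distToSet G u {x} = G.dist u x := by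
  simp [distToSet]

theorem aux_distToSet_univ (u : α) : distToSet G u Set.univ = 0 := by
  refine Nat.eq_zero_of_le_zero (Nat.sInf_le ?_)
  exact ⟨u, Set.mem_univ u, dist_self⟩

theorem aux_distToSet_le {u v : α} {A : Set α} (hv : v ∈ A) : distToSet G u A ≤ G.dist u v :=
  Nat.sInf_le ⟨v, hv, rfl⟩

theorem aux_distToSet_prod (hG : G.Connected) (hH : H.Connected) (u : α) (a : β)
    {A : Set α} {S : Set β} (hA : A.Nonempty) (hS : S.Nonempty) :
    distToSet (G □ H) (u, a) (A ×ˢ S) = distToSet G u A + distToSet H a S := by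
  refine le_antisymm ?_ ?_
  · obtain ⟨v, hv, hvd⟩ := Nat.sInf_mem (hA.image (G.dist u))
    obtain ⟨b, hb, hbd⟩ := Nat.sInf_mem (hS.image (H.dist a))
    have : (G □ H).dist (u, a) (v, b) = distToSet G u A + distToSet H a S := by
      rw [aux_dist_boxProd hG hH, distToSet, distToSet, hvd, hbd]
    exact this ▸ aux_distToSet_le (Set.mk_mem_prod hv hb)
  · refine le_csInf ((hA.prod hS).image _) ?_
    rintro m ⟨⟨v, b⟩, ⟨hv, hb⟩, rfl⟩
    rw [aux_dist_boxProd hG hH]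
    exact Nat.add_le_add (aux_distToSet_le hv) (aux_distToSet_le hb)

end Aux

section Star

variable {n : ℕ}

/-- abbreviation for the star. -/
local notation "K" => completeBipartiteGraph (Fin 1) (Fin n)

theorem aux_star_adj (i : Fin 1) (j : Fin n) : (K).Adj (Sum.inl i) (Sum.inr j) := by simp

theorem aux_star_conn [NeZero n] : (K).Connected := by
  rw [connected_iff]
  refine ⟨fun x y => ?_, ⟨Sum.inl 0⟩⟩
  have hc : ∀ z : Fin 1 ⊕ Fin n, (K).Reachable z (Sum.inl 0) := by
    rintro (i | j)
    · rw [Subsingleton.elim i 0]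
    · exact (aux_star_adj 0 j).symm.reachable
  exact (hc x).trans (hc y).symm

theorem aux_star_dist_inl_inr (i : Fin 1) (j : Fin n) : (K).dist (Sum.inl i) (Sum.inr j) = 1 :=
  dist_eq_one_iff_adj.mpr (aux_star_adj i j)

theorem aux_star_dist_inr_inl (i : Fin 1) (j : Fin n) : (K).dist (Sum.inr j) (Sum.inl i) = 1 := by
  rw [dist_comm]; exact aux_star_dist_inl_inr i j

theorem aux_star_dist_inr_inr [NeZero n] {i j : Fin n} (hij : i ≠ j) :
    (K).dist (Sum.inr i) (Sum.inr j) = 2 := by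
  have hle : (K).dist (Sum.inr i) (Sum.inr j) ≤ 2 := by
    have := dist_le (Walk.cons (aux_star_adj 0 i).symm (Walk.cons (aux_star_adj 0 j) Walk.nil))
    simpa using this
  have h0 : (K).dist (Sum.inr i) (Sum.inr j) ≠ 0 := by
    have := aux_star_conn.pos_dist_of_ne (u := Sum.inr i) (v := Sum.inr j) (by simp [hij])
    omega
  have h1 : (K).dist (Sum.inr i) (Sum.inr j) ≠ 1 := by
    rw [Ne, dist_eq_one_iff_adj]
    simp
  omega

theorem aux_star_sep [NeZero n] (hn : 2 ≤ n) {a b : Fin 1 ⊕ Fin n} (hab : a ≠ b) :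
    ∃ j : Fin n, j ≠ 0 ∧ (K).dist a (Sum.inr j) ≠ (K).dist b (Sum.inr j) := by
  have h10 : (1 : Fin n) ≠ 0 := by
    refine Fin.ne_of_val_ne ?_
    simp [Fin.val_one', Nat.mod_eq_of_lt hn]
  rcases a with i | j <;> rcases b with i' | j'
  · exact absurd (congrArg Sum.inl (Subsingleton.elim i i')) hab
  · by_cases hj' : j' = 0
    · subst hj'
      refine ⟨1, h10, ?_⟩
      rw [aux_star_dist_inl_inr, aux_star_dist_inr_inr (by simpa using h10.symm)]
      omega
    · refine ⟨j', hj', ?_⟩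
      rw [aux_star_dist_inl_inr, SimpleGraph.dist_self]
      omega
  · by_cases hj : j = 0
    · subst hj
      refine ⟨1, h10, ?_⟩
      rw [aux_star_dist_inl_inr, aux_star_dist_inr_inr (by simpa using h10.symm)]
      omega
    · refine ⟨j, hj, ?_⟩
      rw [aux_star_dist_inl_inr, SimpleGraph.dist_self]
      omega
  · have hjj : j ≠ j' := by simpa using hab
    by_cases hj : j = 0
    · subst hj
      refine ⟨j', fun h => hjj h.symm, ?_⟩
      rw [SimpleGraph.dist_self, aux_star_dist_inr_inr hjj]
      omega
    · refine ⟨j, hj, ?_⟩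
      rw [SimpleGraph.dist_self, aux_star_dist_inr_inr fun h => hjj h.symm]
      omega

end Star

theorem stmt_11 {V : Type*} [Fintype V] (G : SimpleGraph V) (hG : G.Connected)
    (n : ℕ) (hn : 2 ≤ n) :
    partitionDim (G.boxProd (completeBipartiteGraph (Fin 1) (Fin n))) ≤
      partitionDim G + (n - 1) := by
  classical
  haveI : NeZero n := ⟨by omega⟩
  set K := completeBipartiteGraph (Fin 1) (Fin n) with hKdef
  have hK : K.Connected := aux_star_conn
  haveI : Nonempty V := hG.nonempty
  -- the set defining partitionDim G is nonempty (singleton partition)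
  have hGne : {m | ∃ Pi : Finset (Set V), Pi.card = m ∧ IsResolvingPartition G ↑Pi}.Nonempty := by
    refine ⟨_, Finset.univ.image (fun v => ({v} : Set V)), rfl, ?_, ?_⟩
    · constructor
      · simp only [Finset.coe_image, Finset.coe_univ, Set.image_univ, Set.mem_range]
        rintro ⟨v, hv⟩
        exact (Set.singleton_nonempty v).ne_empty hv
      · intro v
        refine ⟨{v}, ⟨by simp, rfl⟩, ?_⟩
        rintro P ⟨hP, hvP⟩
        simp only [Finset.coe_image, Finset.coe_univ, Set.image_univ, Set.mem_range] at hP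
        obtain ⟨w, rfl⟩ := hP
        simp_all
    · intro u v huv
      refine ⟨{u}, by simp, ?_⟩
      rw [aux_distToSet_singleton, aux_distToSet_singleton, SimpleGraph.dist_self]
      exact fun h => absurd (hG.pos_dist_of_ne (Ne.symm huv)) (by omega)
  obtain ⟨PiG, hcard, hpartG, hresG⟩ := Nat.sInf_mem hGne
  have hPiGne : ∀ A ∈ PiG, (A : Set V).Nonempty := fun A hA =>
    Set.nonempty_iff_ne_empty.mpr (fun h => hpartG.1 (h ▸ hA))
  -- the construction
  set C : Set (Fin 1 ⊕ Fin n) := {Sum.inl 0, Sum.inr 0} with hCdef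
  have hCne : C.Nonempty := ⟨Sum.inl 0, Or.inl rfl⟩
  set B : Set V → Set (V × (Fin 1 ⊕ Fin n)) := fun A => A ×ˢ C with hBdef
  set Q : Fin n → Set (V × (Fin 1 ⊕ Fin n)) := fun j => Set.univ ×ˢ {Sum.inr j} with hQdef
  set Pi' : Finset (Set (V × (Fin 1 ⊕ Fin n))) :=
    PiG.image B ∪ (Finset.univ.filter (fun j : Fin n => j ≠ 0)).image Q with hPi'def
  obtain ⟨v₀⟩ := ‹Nonempty V›
  have hBinj : Function.Injective B := by
    intro A A' h
    ext v
    constructor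
    · intro hv
      have : (v, Sum.inl 0) ∈ B A' := h ▸ Set.mk_mem_prod hv (Or.inl rfl)
      exact this.1
    · intro hv
      have : (v, Sum.inl 0) ∈ B A := h ▸ Set.mk_mem_prod hv (Or.inl rfl)
      exact this.1
  have hQinj : Function.Injective Q := by
    intro j j' h
    have : (v₀, Sum.inr j) ∈ Q j' := h ▸ Set.mk_mem_prod (Set.mem_univ _) rfl
    simpa using this.2
  have hQnotB : ∀ (j : Fin n) (A : Set V), A.Nonempty → B A ≠ Q j := by
    intro j A hA h
    obtain ⟨v, hv⟩ := hA
    have : (v, Sum.inl 0) ∈ Q j := h ▸ Set.mk_mem_prod hv (Or.inl rfl)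
    simpa using this.2
  -- distToSet computations
  have hQd : ∀ (u : V) (a : Fin 1 ⊕ Fin n) (j : Fin n),
      distToSet (G □ K) (u, a) (Q j) = K.dist a (Sum.inr j) := by
    intro u a j
    rw [hQdef]
    rw [aux_distToSet_prod hG hK u a (Set.univ_nonempty) (Set.singleton_nonempty _)]
    rw [aux_distToSet_univ, aux_distToSet_singleton, Nat.zero_add]
  have hBd : ∀ (u : V) (a : Fin 1 ⊕ Fin n) (A : Set V), A.Nonempty →
      distToSet (G □ K) (u, a) (B A) = distToSet G u A + distToSet K a C := by
    intro u a A hA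
    rw [hBdef]
    exact aux_distToSet_prod hG hK u a hA hCne
  -- cardinality
  have hcard' : Pi'.card = partitionDim G + (n - 1) := by
    rw [hPi'def, Finset.card_union_of_disjoint, Finset.card_image_of_injective _ hBinj,
      Finset.card_image_of_injective _ hQinj, hcard]
    · congr 1
      rw [Finset.filter_ne', Finset.card_erase_of_mem (Finset.mem_univ _), Finset.card_univ,
        Fintype.card_fin]
    · rw [Finset.disjoint_left]
      rintro P hP hP'
      simp only [Finset.mem_image, Finset.mem_filter, Finset.mem_univ, true_and] at hP hP'
      obtain ⟨A, hA, rfl⟩ := hP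
      obtain ⟨j, hj, hQj⟩ := hP'
      exact hQnotB j A (hPiGne A hA) hQj.symm
  refine Nat.sInf_le ⟨Pi', hcard', ?_, ?_⟩
  · -- partition
    constructor
    · intro h
      rw [hPi'def] at h
      simp only [Finset.mem_coe, Finset.mem_union, Finset.mem_image, Finset.mem_filter,
        Finset.mem_univ, true_and] at h
      rcases h with ⟨A, hA, hBA⟩ | ⟨j, hj, hQj⟩
      · exact ((hPiGne A hA).prod hCne).ne_empty hBA
      · exact (Set.univ_nonempty.prod (Set.singleton_nonempty _)).ne_empty hQj
    · rintro ⟨v, w⟩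
      have hmem : ∀ P, P ∈ (Pi' : Set (Set (V × (Fin 1 ⊕ Fin n)))) ↔
          (∃ A ∈ PiG, B A = P) ∨ (∃ j : Fin n, j ≠ 0 ∧ Q j = P) := by
        intro P
        rw [hPi'def]
        simp [Finset.mem_union, Finset.mem_image]
      rcases w with i | j
    -- w = inl i
      · obtain ⟨A, ⟨hA, hvA⟩, hAuniq⟩ := hpartG.2 v
        refine ⟨B A, ⟨(hmem _).mpr (Or.inl ⟨A, hA, rfl⟩),
          Set.mk_mem_prod hvA (by rw [Subsingleton.elim i 0]; exact Or.inl rfl)⟩, ?_⟩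
        rintro P ⟨hP, hvP⟩
        rcases (hmem _).mp hP with ⟨A', hA', rfl⟩ | ⟨j, hj, rfl⟩
        · rw [hAuniq A' ⟨hA', hvP.1⟩]
        · exact absurd hvP.2 (by simp)
      · by_cases hj : j = 0
        · subst hj
          obtain ⟨A, ⟨hA, hvA⟩, hAuniq⟩ := hpartG.2 v
          refine ⟨B A, ⟨(hmem _).mpr (Or.inl ⟨A, hA, rfl⟩),
            Set.mk_mem_prod hvA (Or.inr rfl)⟩, ?_⟩
          rintro P ⟨hP, hvP⟩
          rcases (hmem _).mp hP with ⟨A', hA', rfl⟩ | ⟨j', hj', rfl⟩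
          · rw [hAuniq A' ⟨hA', hvP.1⟩]
          · have := hvP.2
            simp only [hQdef, Set.mem_singleton_iff, Sum.inr.injEq] at this
            exact absurd this.symm hj'
        · refine ⟨Q j, ⟨(hmem _).mpr (Or.inr ⟨j, hj, rfl⟩),
            Set.mk_mem_prod (Set.mem_univ _) rfl⟩, ?_⟩
          rintro P ⟨hP, hvP⟩
          rcases (hmem _).mp hP with ⟨A', hA', rfl⟩ | ⟨j', hj', rfl⟩
          · have := hvP.2
            simp only [hBdef, hCdef, Set.mem_insert_iff, Set.mem_singleton_iff,
              Sum.inr.injEq] at this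
            rcases this with h | h
            · exact absurd h (by simp)
            · exact absurd h hj
          · have := hvP.2
            simp only [hQdef, Set.mem_singleton_iff, Sum.inr.injEq] at this
            rw [this]
  · -- resolving
    rintro ⟨u, a⟩ ⟨v, b⟩ hne
    by_cases hab : a = b
    · subst hab
      have huv : u ≠ v := fun h => hne (by rw [h])
      obtain ⟨P, hP, hd⟩ := hresG u v huv
      refine ⟨B P, ?_, ?_⟩
      · rw [hPi'def]
        simp only [Finset.mem_coe, Finset.mem_union, Finset.mem_image]
        exact Or.inl ⟨P, hP, rfl⟩
      · rw [hBd u a P (hPiGne P hP), hBd v a P (hPiGne P hP)]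
        omega
    · obtain ⟨j, hj, hd⟩ := aux_star_sep hn hab
      refine ⟨Q j, ?_, ?_⟩
      · rw [hPi'def]
        simp only [Finset.mem_coe, Finset.mem_union, Finset.mem_image, Finset.mem_filter,
          Finset.mem_univ, true_and]
        exact Or.inr ⟨j, hj, rfl⟩
      · rw [hQd u a j, hQd v b j]
        exact hd
end
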